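/- Let N ≥ 0 be real. For every continuously differentiable function g : [r_i, r_o] → ℝ with g(r_i) = g(r_o) = 0, the Poincaré-type inequality ∫_{r_i}^{r_o} (r/(N² + r²))·g'(r)² dr ≥ ((π/ln η)²/(N² + r_o²)) · ∫_{r_i}^{r_o} g(r)²/r dr holds. -/

import Mathlib

open Real MeasureTheory

lemma cot_le_inv {x : ℝ} (h0 : 0 < x) (hπ : x < π) : Real.cos x / Real.sin x ≤ 1 / x := by
  have hs : 0 < Real.sin x := Real.sin_pos_of_pos_of_lt_pi h0 hπ
  rcases le_or_gt (Real.cos x) 0 with hc | hc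
  · have : Real.cos x / Real.sin x ≤ 0 := div_nonpos_of_nonpos_of_nonneg hc hs.le
    linarith [one_div_pos.2 h0]
  · have hx2 : x < π / 2 := by
      by_contra h
      push_neg at h
      have := Real.cos_nonpos_of_pi_div_two_le_of_le h (by linarith [Real.pi_pos])
      linarith
    have ht := Real.lt_tan h0 hx2
    rw [Real.tan_eq_sin_div_cos] at ht
    rw [div_le_div_iff₀ hs h0]
    have := (mul_lt_mul_iff_left₀ hc).2 ht
    rw [div_mul_cancel₀ _ (ne_of_gt hc)] at this
    nlinarith

lemma log_lb {a r : ℝ} (ha : 0 < a) (har : a ≤ r) : (r - a) / r ≤ Real.log r - Real.log a := by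
  have hr : 0 < r := lt_of_lt_of_le ha har
  have h1 := Real.log_le_sub_one_of_pos (show 0 < a / r from div_pos ha hr)
  rw [Real.log_div (ne_of_gt ha) (ne_of_gt hr)] at h1
  have h2 : a / r - 1 = -((r - a) / r) := by field_simp; ring
  linarith [h1.trans_eq h2]

set_option maxHeartbeats 2000000 in
theorem hardy_step (a b : ℝ) (ha : 0 < a) (hab : a < b)
    (g : ℝ → ℝ) (hg : ContDiffOn ℝ 1 g (Set.Icc a b))
    (hga : g a = 0) (hgb : g b = 0) :
    (Real.pi / (Real.log b - Real.log a)) ^ 2 * ∫ r in a..b, (g r) ^ 2 / r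
      ≤ ∫ r in a..b, r * (derivWithin g (Set.Icc a b) r) ^ 2 := by
  set G := derivWithin g (Set.Icc a b) with hGdef
  have hb : 0 < b := ha.trans hab
  have hL : 0 < Real.log b - Real.log a := by
    have := Real.log_lt_log ha hab; linarith
  set L := Real.log b - Real.log a with hLdef
  set k := Real.pi / L with hkdef
  have hk : 0 < k := div_pos Real.pi_pos hL
  have hkL : k * L = Real.pi := by rw [hkdef]; field_simp
  have hgc : ContinuousOn g (Set.Icc a b) := hg.continuousOn
  have hGc : ContinuousOn G (Set.Icc a b) :=
    hg.continuousOn_derivWithin (uniqueDiffOn_Icc hab) le_rfl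
  have hder : ∀ r ∈ Set.Icc a b, HasDerivWithinAt g (G r) (Set.Icc a b) r := fun r hr =>
    ((hg.differentiableOn one_ne_zero) r hr).hasDerivWithinAt
  have hderiv : ∀ r ∈ Set.Ioo a b, HasDerivAt g (G r) r := fun r hr =>
    (hder r (Set.Ioo_subset_Icc_self hr)).hasDerivAt (Icc_mem_nhds hr.1 hr.2)
  obtain ⟨M, hM⟩ := (isCompact_Icc).exists_bound_of_continuousOn hGc
  have hM0 : 0 ≤ M := le_trans (norm_nonneg _) (hM a (Set.left_mem_Icc.2 hab.le))
  have hgbd : ∀ r ∈ Set.Icc a b, |g r| ≤ M * (r - a) := by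
    intro r hr
    have := Convex.norm_image_sub_le_of_norm_hasDerivWithin_le hder hM (convex_Icc a b)
      (Set.left_mem_Icc.2 hab.le) hr
    rw [hga] at this
    simpa [abs_of_nonneg (sub_nonneg.2 hr.1)] using this
  have hgbd' : ∀ r ∈ Set.Icc a b, |g r| ≤ M * (b - r) := by
    intro r hr
    have := Convex.norm_image_sub_le_of_norm_hasDerivWithin_le hder hM (convex_Icc a b)
      (Set.right_mem_Icc.2 hab.le) hr
    rw [hgb] at this
    simpa [abs_sub_comm, abs_of_nonneg (sub_nonneg.2 hr.2)] using this
  -- the test function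
  set θ : ℝ → ℝ := fun r => k * (Real.log r - Real.log a) with hθdef
  set c : ℝ → ℝ := fun r => k * Real.cos (θ r) / Real.sin (θ r) with hcdef
  have hθpos : ∀ r ∈ Set.Ioo a b, 0 < θ r := by
    intro r hr
    have := Real.log_lt_log ha hr.1
    have : 0 < Real.log r - Real.log a := by linarith
    positivity
  have hθlt : ∀ r ∈ Set.Ioo a b, θ r < Real.pi := by
    intro r hr
    have h1 := Real.log_lt_log (ha.trans hr.1) hr.2
    have h2 : Real.log r - Real.log a < L := by rw [hLdef]; linarith
    calc θ r = k * (Real.log r - Real.log a) := rfl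
    _ < k * L := (mul_lt_mul_iff_right₀ hk).2 h2
    _ = Real.pi := hkL
  have hsin : ∀ r ∈ Set.Ioo a b, 0 < Real.sin (θ r) := fun r hr =>
    Real.sin_pos_of_pos_of_lt_pi (hθpos r hr) (hθlt r hr)
  have hθder : ∀ r ∈ Set.Ioo a b, HasDerivAt θ (k / r) r := by
    intro r hr
    have hr0 : (0:ℝ) < r := ha.trans hr.1
    have := ((Real.hasDerivAt_log (ne_of_gt hr0)).sub_const (Real.log a)).const_mul k
    simpa [hθdef, div_eq_mul_inv] using this
  have hcder : ∀ r ∈ Set.Ioo a b, HasDerivAt c (-(k^2 + (c r)^2) / r) r := by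
    intro r hr
    have hr0 : (0:ℝ) < r := ha.trans hr.1
    have hs := hsin r hr
    have hθ' := hθder r hr
    have hcos : HasDerivAt (fun s => k * Real.cos (θ s)) (k * (-Real.sin (θ r) * (k / r))) r := by
      exact ((Real.hasDerivAt_cos (θ r)).comp r hθ').const_mul k
    have hsin' : HasDerivAt (fun s => Real.sin (θ s)) (Real.cos (θ r) * (k / r)) r :=
      (Real.hasDerivAt_sin (θ r)).comp r hθ'
    have hdiv := hcos.div hsin' (ne_of_gt hs)
    convert hdiv using 1
    · rfl
    · rfl
    · rfl
    have hpy := Real.sin_sq_add_cos_sq (θ r)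
    rw [hcdef]
    field_simp
    nlinarith [hpy, sq_nonneg (Real.sin (θ r))]
  -- bounds on c near the endpoints
  have hcub : ∀ r ∈ Set.Ioo a b, c r ≤ b / (r - a) := by
    intro r hr
    have hr0 : (0:ℝ) < r := ha.trans hr.1
    have hra : 0 < r - a := sub_pos.2 hr.1
    have hlg : (r - a) / r ≤ Real.log r - Real.log a := log_lb ha hr.1.le
    have hlg0 : 0 < Real.log r - Real.log a := lt_of_lt_of_le (div_pos hra hr0) hlg
    have h1 : c r ≤ k * (1 / θ r) := by
      have hcot := cot_le_inv (hθpos r hr) (hθlt r hr)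
      have hce : c r = k * (Real.cos (θ r) / Real.sin (θ r)) := by rw [hcdef]; ring
      rw [hce]
      exact mul_le_mul_of_nonneg_left hcot hk.le
    have h2 : k * (1 / θ r) = 1 / (Real.log r - Real.log a) := by
      rw [hθdef]
      field_simp
    have h3 : 1 / (Real.log r - Real.log a) ≤ r / (r - a) := by
      rw [div_le_div_iff₀ hlg0 hra]
      have := mul_le_mul_of_nonneg_right hlg hr0.le
      have hd : (r - a) / r * r = r - a := by field_simp
      nlinarith
    have h4 : r / (r - a) ≤ b / (r - a) := by gcongr; exact hr.2.le
    linarith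
  have hclb : ∀ r ∈ Set.Ioo a b, -c r ≤ b / (b - r) := by
    intro r hr
    have hr0 : (0:ℝ) < r := ha.trans hr.1
    have hbr : 0 < b - r := sub_pos.2 hr.2
    have hlg : (b - r) / b ≤ Real.log b - Real.log r := log_lb hr0 hr.2.le
    have hlg0 : 0 < Real.log b - Real.log r := lt_of_lt_of_le (div_pos hbr hb) hlg
    have hψ : Real.pi - θ r = k * (Real.log b - Real.log r) := by
      rw [hθdef, ← hkL, hLdef]; ring
    have h1 : -c r ≤ k * (1 / (Real.pi - θ r)) := by
      have hcot := cot_le_inv (x := Real.pi - θ r)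
        (by linarith [hθlt r hr]) (by linarith [hθpos r hr, Real.pi_pos])
      rw [Real.cos_pi_sub, Real.sin_pi_sub] at hcot
      have hce : -c r = k * (-Real.cos (θ r) / Real.sin (θ r)) := by rw [hcdef]; ring
      rw [hce]
      exact mul_le_mul_of_nonneg_left hcot hk.le
    have h2 : k * (1 / (Real.pi - θ r)) = 1 / (Real.log b - Real.log r) := by
      rw [hψ]
      field_simp
    have h3 : 1 / (Real.log b - Real.log r) ≤ b / (b - r) := by
      rw [div_le_div_iff₀ hlg0 hbr]
      have := mul_le_mul_of_nonneg_right hlg hb.le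
      have hd : (b - r) / b * b = b - r := by field_simp
      nlinarith
    linarith
  -- the integrand
  set f : ℝ → ℝ := fun r => r * G r ^ 2 - k^2 * ((g r)^2 / r) with hfdef
  have hrne : ∀ r ∈ Set.Icc a b, r ≠ 0 := fun r hr => ne_of_gt (ha.trans_le hr.1)
  have hfcont : ContinuousOn f (Set.Icc a b) :=
    (continuousOn_id.mul (hGc.pow 2)).sub
      (continuousOn_const.mul ((hgc.pow 2).div continuousOn_id hrne))
  have hfint : ∀ u v : ℝ, u ∈ Set.Icc a b → v ∈ Set.Icc a b →
      IntervalIntegrable f volume u v := by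
    intro u v hu hv
    apply ContinuousOn.intervalIntegrable
    exact hfcont.mono (Set.uIcc_subset_Icc hu hv)
  -- core estimate on compact subintervals
  have hcore : ∀ a' b', a < a' → a' ≤ b' → b' < b →
      c b' * (g b')^2 - c a' * (g a')^2 ≤ ∫ r in a'..b', f r := by
    intro a' b' ha' hab' hb'
    have hsub : Set.Icc a' b' ⊆ Set.Ioo a b := Set.Icc_subset_Ioo ha' hb'
    have hsub2 : Set.Icc a' b' ⊆ Set.Icc a b := hsub.trans Set.Ioo_subset_Icc_self
    set F' : ℝ → ℝ := fun r => (-(k^2 + (c r)^2) / r) * (g r)^2 + c r * (2 * g r ^ 1 * G r)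
      with hF'def
    have hFder : ∀ r ∈ Set.uIcc a' b', HasDerivAt (fun s => c s * (g s)^2) (F' r) r := by
      intro r hr
      rw [Set.uIcc_of_le hab'] at hr
      exact (hcder r (hsub hr)).mul ((hderiv r (hsub hr)).pow 2)
    have hccont : ContinuousOn c (Set.Icc a' b') := fun r hr =>
      ((hcder r (hsub hr)).continuousAt).continuousWithinAt
    have hgc' : ContinuousOn g (Set.Icc a' b') := hgc.mono hsub2
    have hGc' : ContinuousOn G (Set.Icc a' b') := hGc.mono hsub2
    have hrne' : ∀ r ∈ Set.Icc a' b', r ≠ 0 := fun r hr => hrne r (hsub2 hr)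
    have hF'cont : ContinuousOn F' (Set.Icc a' b') :=
      (((continuousOn_const.add (hccont.pow 2)).neg.div continuousOn_id hrne').mul
        (hgc'.pow 2)).add (hccont.mul ((continuousOn_const.mul (hgc'.pow 1)).mul hGc'))
    have hF'int : IntervalIntegrable F' volume a' b' := by
      rw [intervalIntegrable_iff_integrableOn_Icc_of_le hab']
      exact hF'cont.integrableOn_compact isCompact_Icc
    have hFTC : ∫ r in a'..b', F' r = c b' * (g b')^2 - c a' * (g a')^2 :=
      intervalIntegral.integral_eq_sub_of_hasDerivAt hFder hF'int
    have hfint' : IntervalIntegrable f volume a' b' :=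
      hfint a' b' (hsub2 (Set.left_mem_Icc.2 hab')) (hsub2 (Set.right_mem_Icc.2 hab'))
    have hnonneg : ∀ r ∈ Set.Icc a' b', 0 ≤ f r - F' r := by
      intro r hr
      have hr0 : (0:ℝ) < r := ha.trans (hsub hr).1
      have hid : f r - F' r = (r * G r - c r * g r)^2 / r := by
        rw [hfdef, hF'def]
        field_simp
        ring
      rw [hid]
      positivity
    have hkey : 0 ≤ ∫ r in a'..b', (f r - F' r) :=
      intervalIntegral.integral_nonneg hab' (fun r hr => hnonneg r hr)
    rw [intervalIntegral.integral_sub hfint' hF'int, hFTC] at hkey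
    linarith
  -- boundary term bounds
  have hbdub : ∀ r ∈ Set.Ioo a b, c r * (g r)^2 ≤ M^2 * b * (r - a) := by
    intro r hr
    have hra : 0 < r - a := sub_pos.2 hr.1
    have hg2 : (g r)^2 ≤ (M * (r - a))^2 := by
      have := hgbd r (Set.Ioo_subset_Icc_self hr)
      nlinarith [abs_nonneg (g r), sq_abs (g r)]
    rcases le_or_gt (c r) 0 with hc | hc
    · nlinarith [mul_nonpos_of_nonpos_of_nonneg hc (sq_nonneg (g r)),
        mul_nonneg (mul_nonneg (sq_nonneg M) hb.le) hra.le]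
    · have h1 := hcub r hr
      have : c r * (g r)^2 ≤ (b / (r - a)) * (M * (r - a))^2 := by
        apply mul_le_mul h1 hg2 (sq_nonneg _) (by positivity)
      calc c r * (g r)^2 ≤ (b / (r - a)) * (M * (r - a))^2 := this
      _ = M^2 * b * (r - a) := by field_simp
  have hbdlb : ∀ r ∈ Set.Ioo a b, -(M^2 * b * (b - r)) ≤ c r * (g r)^2 := by
    intro r hr
    have hbr : 0 < b - r := sub_pos.2 hr.2
    have hg2 : (g r)^2 ≤ (M * (b - r))^2 := by
      have := hgbd' r (Set.Ioo_subset_Icc_self hr)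
      nlinarith [abs_nonneg (g r), sq_abs (g r)]
    rcases le_or_gt 0 (c r) with hc | hc
    · nlinarith [mul_nonneg hc (sq_nonneg (g r)),
        mul_nonneg (mul_nonneg (sq_nonneg M) hb.le) hbr.le]
    · have h1 := hclb r hr
      have h2 : -(c r * (g r)^2) = (-c r) * (g r)^2 := by ring
      have : (-c r) * (g r)^2 ≤ (b / (b - r)) * (M * (b - r))^2 := by
        apply mul_le_mul h1 hg2 (sq_nonneg _) (by positivity)
      have h3 : (b / (b - r)) * (M * (b - r))^2 = M^2 * b * (b - r) := by field_simp
      linarith [this.trans_eq h3, h2]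
  -- global lower bound for f
  set K : ℝ := k^2 * (M * (b - a))^2 / a with hKdef
  have hK0 : 0 ≤ K := by positivity
  have hflb : ∀ r ∈ Set.Icc a b, -K ≤ f r := by
    intro r hr
    have hr0 : (0:ℝ) < r := ha.trans_le hr.1
    have hg2 : (g r)^2 ≤ (M * (b - a))^2 := by
      have h1 : |g r| ≤ M * (b - a) :=
        le_trans (hgbd r hr) (by nlinarith [hr.1, hr.2])
      calc (g r)^2 = |g r|^2 := (sq_abs _).symm
      _ ≤ (M * (b - a))^2 := pow_le_pow_left₀ (abs_nonneg _) h1 2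
    have h2 : (g r)^2 / r ≤ (M * (b - a))^2 / a := by
      calc (g r)^2 / r ≤ (g r)^2 / a := by gcongr; exact hr.1
      _ ≤ (M * (b - a))^2 / a := by gcongr
    have : f r = r * G r ^ 2 - k^2 * ((g r)^2 / r) := rfl
    rw [this, hKdef]
    have h3 : 0 ≤ r * G r ^ 2 := by positivity
    have h4 : k^2 * ((g r)^2 / r) ≤ k^2 * ((M * (b - a))^2 / a) := by
      exact mul_le_mul_of_nonneg_left h2 (sq_nonneg k)
    have h5 : k^2 * ((M * (b - a))^2 / a) = k^2 * (M * (b - a))^2 / a := by ring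
    linarith
  -- combining: for every small ε the full integral is ≥ -2(K + M²b)ε
  have hmain : ∀ ε : ℝ, 0 < ε → ε ≤ (b - a)/2 →
      -(2 * (K + M^2 * b) * ε) ≤ ∫ r in a..b, f r := by
    intro ε hε hε2
    set a' := a + ε with ha'def
    set b' := b - ε with hb'def
    have ha' : a < a' := by simp [ha'def]; linarith
    have hb' : b' < b := by simp [hb'def]; linarith
    have hab' : a' ≤ b' := by simp [ha'def, hb'def]; linarith
    have ha'mem : a' ∈ Set.Icc a b := ⟨ha'.le, by linarith⟩
    have hb'mem : b' ∈ Set.Icc a b := ⟨by linarith, hb'.le⟩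
    have hamem : a ∈ Set.Icc a b := Set.left_mem_Icc.2 hab.le
    have hbmem : b ∈ Set.Icc a b := Set.right_mem_Icc.2 hab.le
    have hsplit : ∫ r in a..b, f r
        = (∫ r in a..a', f r) + (∫ r in a'..b', f r) + (∫ r in b'..b, f r) := by
      rw [intervalIntegral.integral_add_adjacent_intervals (hfint a a' hamem ha'mem)
        (hfint a' b' ha'mem hb'mem),
        intervalIntegral.integral_add_adjacent_intervals (hfint a b' hamem hb'mem)
        (hfint b' b hb'mem hbmem)]
    have htail1 : -(K * ε) ≤ ∫ r in a..a', f r := by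
      have hc : ∫ r in a..a', (-K : ℝ) = -K * ε := by
        rw [intervalIntegral.integral_const]
        simp [ha'def]
        ring
      have := intervalIntegral.integral_mono_on ha'.le
        (intervalIntegrable_const) (hfint a a' hamem ha'mem)
        (fun r hr => hflb r ⟨hr.1, le_trans hr.2 ha'mem.2⟩)
      rw [hc] at this
      linarith
    have htail2 : -(K * ε) ≤ ∫ r in b'..b, f r := by
      have hc : ∫ r in b'..b, (-K : ℝ) = -K * ε := by
        rw [intervalIntegral.integral_const]
        simp [hb'def]
        ring
      have := intervalIntegral.integral_mono_on hb'.le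
        (intervalIntegrable_const) (hfint b' b hb'mem hbmem)
        (fun r hr => hflb r ⟨le_trans hb'mem.1 hr.1, hr.2⟩)
      rw [hc] at this
      linarith
    have hmid := hcore a' b' ha' hab' hb'
    have hio1 : a' ∈ Set.Ioo a b := ⟨ha', by linarith⟩
    have hio2 : b' ∈ Set.Ioo a b := ⟨by linarith, hb'⟩
    have hB1 : c a' * (g a')^2 ≤ M^2 * b * ε := by
      have := hbdub a' hio1
      simpa [ha'def] using this
    have hB2 : -(M^2 * b * ε) ≤ c b' * (g b')^2 := by
      have := hbdlb b' hio2
      simpa [hb'def] using this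
    rw [hsplit]
    have : -(M^2 * b * ε) - M^2 * b * ε ≤ ∫ r in a'..b', f r := by linarith
    nlinarith [htail1, htail2, this]
  -- hence the integral of f is nonnegative
  have hpos : 0 ≤ ∫ r in a..b, f r := by
    by_contra h
    push_neg at h
    set I := ∫ r in a..b, f r with hIdef
    set C := K + M^2 * b with hCdef
    have hC0 : 0 ≤ C := add_nonneg hK0 (by positivity)
    set ε := min ((b - a)/4) (-I/(2*C + 1)) with hεdef
    have hε1 : 0 < ε := lt_min (by linarith) (div_pos (by linarith) (by linarith))
    have hε2 : ε ≤ (b - a)/2 := le_trans (min_le_left _ _) (by linarith)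
    have h1 := hmain ε hε1 hε2
    have h2 : ε ≤ -I/(2*C + 1) := min_le_right _ _
    have h3 : ε * (2*C + 1) ≤ -I := (le_div_iff₀ (by linarith)).mp h2
    nlinarith [h1, h3, hε1, hC0]
  -- split the integral
  have hint1 : IntervalIntegrable (fun r => r * G r ^ 2) volume a b := by
    apply ContinuousOn.intervalIntegrable
    apply (continuousOn_id.mul (hGc.pow 2)).mono
    rw [Set.uIcc_of_le hab.le]
  have hint2 : IntervalIntegrable (fun r => k^2 * ((g r)^2 / r)) volume a b := by
    apply ContinuousOn.intervalIntegrable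
    apply (continuousOn_const.mul ((hgc.pow 2).div continuousOn_id hrne)).mono
    rw [Set.uIcc_of_le hab.le]
  have hsplit2 : ∫ r in a..b, f r
      = (∫ r in a..b, r * G r ^ 2) - ∫ r in a..b, k^2 * ((g r)^2 / r) :=
    intervalIntegral.integral_sub hint1 hint2
  have hmul : ∫ r in a..b, k^2 * ((g r)^2 / r) = k^2 * ∫ r in a..b, (g r)^2 / r :=
    intervalIntegral.integral_const_mul _ _
  rw [hsplit2, hmul] at hpos
  have hfin : k^2 * ∫ r in a..b, (g r)^2 / r ≤ ∫ r in a..b, r * G r ^ 2 := by linarith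
  simpa only [hkdef, hLdef, hGdef] using hfin

/-- Poincaré-type inequality on the annulus `[ri, ro]` with weight
`r / (N² + r²)` and `η = ri / ro`. -/
theorem stmt_8
    (ri ro : ℝ) (hri : 0 < ri) (hio : ri < ro)
    (N : ℝ) (hN : 0 ≤ N)
    (g : ℝ → ℝ) (hg : ContDiffOn ℝ 1 g (Set.Icc ri ro))
    (hgi : g ri = 0) (hgo : g ro = 0) :
    ∫ r in ri..ro, (r / (N ^ 2 + r ^ 2)) * (deriv g r) ^ 2
      ≥ (Real.pi / Real.log (ri / ro)) ^ 2 / (N ^ 2 + ro ^ 2)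
          * ∫ r in ri..ro, (g r) ^ 2 / r := by
  have hro : 0 < ro := hri.trans hio
  set G := derivWithin g (Set.Icc ri ro) with hGdef
  have hGc : ContinuousOn G (Set.Icc ri ro) :=
    hg.continuousOn_derivWithin (uniqueDiffOn_Icc hio) le_rfl
  have hderiv : ∀ r ∈ Set.Ioo ri ro, HasDerivAt g (G r) r := fun r hr =>
    (((hg.differentiableOn one_ne_zero) r (Set.Ioo_subset_Icc_self hr)).hasDerivWithinAt).hasDerivAt
      (Icc_mem_nhds hr.1 hr.2)
  have hDpos : ∀ r : ℝ, ri ≤ r → 0 < N ^ 2 + r ^ 2 := by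
    intro r hr
    have hr0 : (0:ℝ) < r := hri.trans_le hr
    nlinarith [sq_nonneg N]
  have hDo : 0 < N ^ 2 + ro ^ 2 := hDpos ro hio.le
  -- replace deriv by derivWithin a.e.
  have hae : ∫ r in ri..ro, (r / (N ^ 2 + r ^ 2)) * (deriv g r) ^ 2
      = ∫ r in ri..ro, (r / (N ^ 2 + r ^ 2)) * (G r) ^ 2 := by
    apply intervalIntegral.integral_congr_ae
    have hne : ∀ᵐ x ∂(volume : Measure ℝ), x ≠ ro := by
      rw [MeasureTheory.ae_iff]
      have : {x : ℝ | ¬x ≠ ro} = {ro} := by ext x; simp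
      rw [this]
      exact measure_singleton ro
    filter_upwards [hne] with x hx hxI
    rw [Set.uIoc_of_le hio.le] at hxI
    have hxo : x ∈ Set.Ioo ri ro := ⟨hxI.1, lt_of_le_of_ne hxI.2 hx⟩
    rw [(hderiv x hxo).deriv]
  rw [hae, ge_iff_le]
  -- constant rewriting
  have hL : 0 < Real.log ro - Real.log ri := by
    have := Real.log_lt_log hri hio; linarith
  have hconst : (Real.pi / Real.log (ri / ro)) ^ 2
      = (Real.pi / (Real.log ro - Real.log ri)) ^ 2 := by
    rw [Real.log_div (ne_of_gt hri) (ne_of_gt hro)]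
    rw [show Real.log ri - Real.log ro = -(Real.log ro - Real.log ri) by ring]
    rw [div_neg, neg_sq]
  -- integrability
  have hmono : ∀ r ∈ Set.Icc ri ro,
      (1 / (N ^ 2 + ro ^ 2)) * (r * G r ^ 2) ≤ (r / (N ^ 2 + r ^ 2)) * (G r) ^ 2 := by
    intro r hr
    have hr0 : 0 < r := hri.trans_le hr.1
    have h1 : r / (N ^ 2 + ro ^ 2) ≤ r / (N ^ 2 + r ^ 2) := by
      apply div_le_div_of_nonneg_left hr0.le (hDpos r hr.1)
      nlinarith [hr.2, hr0]
    calc (1 / (N ^ 2 + ro ^ 2)) * (r * G r ^ 2)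
        = (r / (N ^ 2 + ro ^ 2)) * G r ^ 2 := by ring
    _ ≤ (r / (N ^ 2 + r ^ 2)) * G r ^ 2 :=
        mul_le_mul_of_nonneg_right h1 (sq_nonneg _)
  have hint1 : IntervalIntegrable (fun r => (1 / (N ^ 2 + ro ^ 2)) * (r * G r ^ 2))
      volume ri ro := by
    apply ContinuousOn.intervalIntegrable
    apply (continuousOn_const.mul (continuousOn_id.mul (hGc.pow 2))).mono
    rw [Set.uIcc_of_le hio.le]
  have hint2 : IntervalIntegrable (fun r => (r / (N ^ 2 + r ^ 2)) * (G r) ^ 2)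
      volume ri ro := by
    apply ContinuousOn.intervalIntegrable
    have hc2 : ContinuousOn (fun r => (r / (N ^ 2 + r ^ 2)) * (G r) ^ 2) (Set.Icc ri ro) :=
      ((continuousOn_id.div (continuousOn_const.add (continuousOn_id.pow 2))
        (fun r hr => ne_of_gt (hDpos r hr.1))).mul (hGc.pow 2))
    apply hc2.mono
    rw [Set.uIcc_of_le hio.le]
  have hstep := intervalIntegral.integral_mono_on hio.le hint1 hint2 hmono
  rw [intervalIntegral.integral_const_mul] at hstep
  have hhardy := hardy_step ri ro hri hio g hg hgi hgo
  have hgint : 0 ≤ ∫ r in ri..ro, (g r) ^ 2 / r := by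
    apply intervalIntegral.integral_nonneg hio.le
    intro r hr
    have : 0 < r := hri.trans_le hr.1
    positivity
  rw [hconst]
  calc (Real.pi / (Real.log ro - Real.log ri)) ^ 2 / (N ^ 2 + ro ^ 2)
        * ∫ r in ri..ro, (g r) ^ 2 / r
      = (1 / (N ^ 2 + ro ^ 2)) *
        ((Real.pi / (Real.log ro - Real.log ri)) ^ 2 * ∫ r in ri..ro, (g r) ^ 2 / r) := by
        ring
  _ ≤ (1 / (N ^ 2 + ro ^ 2)) * ∫ r in ri..ro, r * G r ^ 2 := by
      apply mul_le_mul_of_nonneg_left hhardy (by positivity)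
  _ ≤ ∫ r in ri..ro, (r / (N ^ 2 + r ^ 2)) * (G r) ^ 2 := hstep
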